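/- Let T = G ×₁ A^{(1)} ⋯ ×_N A^{(N)} where each A^{(n)} ∈ ℝ^{I_n×r_n} has orthonormal columns, let B^{(n)} ∈ ℝ^{I_n×r_n} have orthonormal columns, and set X_opt = G ×₁ (B^{(1)})ᵀA^{(1)} ⋯ ×_N (B^{(N)})ᵀA^{(N)}. Let sin θ = max_n ‖sin Θ(B^{(n)}, A^{(n)})‖ and φ = ‖X_opt ×₁ B^{(1)} ⋯ ×_N B^{(N)} − T‖_F. Then φ ≤ ‖T‖_F · [(1 + sin θ)^N − 1]. -/

import Mathlib

open Matrix

/-- Spectral norm (operator 2-norm) of a real matrix. -/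
noncomputable def specNorm {m n : Type*} [Fintype m] [Fintype n] [DecidableEq n]
    (A : Matrix m n ℝ) : ℝ :=
  ‖LinearMap.toContinuousLinearMap (Matrix.toEuclideanLin A)‖

/-- Multilinear (Tucker) product of a core tensor with factor matrices in every mode. -/
noncomputable def tuckerMap {N : ℕ} {I r : Fin N → ℕ}
    (A : ∀ k, Matrix (Fin (I k)) (Fin (r k)) ℝ)
    (G : (∀ k, Fin (r k)) → ℝ) : (∀ k, Fin (I k)) → ℝ :=
  fun i => ∑ j, (∏ k, A k (i k) (j k)) * G j

lemma sqrt_sum_sq_eq_norm {ι : Type*} [Fintype ι] (x : ι → ℝ) :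
    Real.sqrt (∑ i, x i ^ 2) = ‖(WithLp.linearEquiv 2 ℝ (ι → ℝ)).symm x‖ := by
  rw [EuclideanSpace.norm_eq]
  congr 1
  apply Finset.sum_congr rfl
  intro i _
  rw [WithLp.linearEquiv_symm_apply]
  simp [Real.norm_eq_abs, sq_abs]

lemma sqrt_sum_sq_sum_le {ι σ : Type*} [Fintype ι] (P : Finset σ) (g : σ → ι → ℝ) :
    Real.sqrt (∑ i, (∑ S ∈ P, g S i) ^ 2) ≤ ∑ S ∈ P, Real.sqrt (∑ i, g S i ^ 2) := by
  have h : (WithLp.linearEquiv 2 ℝ (ι → ℝ)).symm (fun i => ∑ S ∈ P, g S i)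
      = ∑ S ∈ P, (WithLp.linearEquiv 2 ℝ (ι → ℝ)).symm (g S) := by
    rw [← map_sum]
    congr 1
    ext i
    simp [Finset.sum_apply]
  rw [sqrt_sum_sq_eq_norm, h]
  refine le_trans (norm_sum_le _ _) ?_
  exact le_of_eq (Finset.sum_congr rfl fun S _ => (sqrt_sum_sq_eq_norm (g S)).symm)

lemma specNorm_nonneg {m n : Type*} [Fintype m] [Fintype n] [DecidableEq n]
    (A : Matrix m n ℝ) : 0 ≤ specNorm A := norm_nonneg _

lemma specCLM_apply {m n : Type*} [Fintype m] [Fintype n] [DecidableEq n]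
    (A : Matrix m n ℝ) (v : n → ℝ) :
    LinearMap.toContinuousLinearMap (Matrix.toEuclideanLin A)
      ((WithLp.linearEquiv 2 ℝ (n → ℝ)).symm v)
      = (WithLp.linearEquiv 2 ℝ (m → ℝ)).symm (A.mulVec v) := rfl

lemma sum_sq_mulVec_le {m n : Type*} [Fintype m] [Fintype n] [DecidableEq n]
    (A : Matrix m n ℝ) (v : n → ℝ) :
    ∑ i, (A.mulVec v i) ^ 2 ≤ specNorm A ^ 2 * ∑ j, v j ^ 2 := by
  have h := (LinearMap.toContinuousLinearMap (Matrix.toEuclideanLin A)).le_opNorm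
    ((WithLp.linearEquiv 2 ℝ (n → ℝ)).symm v)
  rw [specCLM_apply, ← sqrt_sum_sq_eq_norm, ← sqrt_sum_sq_eq_norm] at h
  have h2 := pow_le_pow_left₀ (Real.sqrt_nonneg _) h 2
  rw [Real.sq_sqrt (by positivity), mul_pow, Real.sq_sqrt (by positivity)] at h2
  exact h2

lemma sum_sq_mulVec_eq {m n : Type*} [Fintype m] [Fintype n] [DecidableEq n]
    (A : Matrix m n ℝ) (hA : Aᵀ * A = 1) (v : n → ℝ) :
    ∑ i, (A.mulVec v i) ^ 2 = ∑ j, v j ^ 2 := by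
  have h1 : ∀ (w : m → ℝ), ∑ i, w i ^ 2 = w ⬝ᵥ w := by
    intro w; simp [dotProduct, sq]
  have h2 : ∀ (w : n → ℝ), ∑ i, w i ^ 2 = w ⬝ᵥ w := by
    intro w; simp [dotProduct, sq]
  rw [h1 (A.mulVec v), h2 v, Matrix.dotProduct_mulVec, ← Matrix.mulVec_transpose,
    Matrix.mulVec_mulVec, hA, Matrix.one_mulVec]

lemma specNorm_le_one {m n : Type*} [Fintype m] [Fintype n] [DecidableEq n]
    (A : Matrix m n ℝ) (hA : Aᵀ * A = 1) : specNorm A ≤ 1 := by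
  apply ContinuousLinearMap.opNorm_le_bound _ zero_le_one
  intro x
  have hx : x = (WithLp.linearEquiv 2 ℝ (n → ℝ)).symm ((WithLp.linearEquiv 2 ℝ (n → ℝ)) x) := rfl
  rw [one_mul, hx, specCLM_apply, ← sqrt_sum_sq_eq_norm, ← sqrt_sum_sq_eq_norm,
    sum_sq_mulVec_eq A hA]

lemma specNorm_mul_le {m n p : Type*} [Fintype m] [Fintype n] [Fintype p]
    [DecidableEq n] [DecidableEq p]
    (A : Matrix m n ℝ) (B : Matrix n p ℝ) :
    specNorm (A * B) ≤ specNorm A * specNorm B := by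
  apply ContinuousLinearMap.opNorm_le_bound _
    (mul_nonneg (norm_nonneg _) (norm_nonneg _))
  intro x
  have hx : x = (WithLp.linearEquiv 2 ℝ (p → ℝ)).symm ((WithLp.linearEquiv 2 ℝ (p → ℝ)) x) := rfl
  have key : LinearMap.toContinuousLinearMap (Matrix.toEuclideanLin (A * B)) x
      = LinearMap.toContinuousLinearMap (Matrix.toEuclideanLin A)
        (LinearMap.toContinuousLinearMap (Matrix.toEuclideanLin B) x) := by
    rw [hx, specCLM_apply, specCLM_apply, specCLM_apply, ← Matrix.mulVec_mulVec]
  rw [key]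
  calc ‖_‖ ≤ specNorm A * ‖LinearMap.toContinuousLinearMap (Matrix.toEuclideanLin B) x‖ :=
        ContinuousLinearMap.le_opNorm _ _
    _ ≤ specNorm A * (specNorm B * ‖x‖) := by
        apply mul_le_mul_of_nonneg_left (ContinuousLinearMap.le_opNorm _ _) (norm_nonneg _)
    _ = specNorm A * specNorm B * ‖x‖ := by ring

lemma sum_pi_succ {N : ℕ} {I : Fin (N + 1) → ℕ} (g : (∀ k, Fin (I k)) → ℝ) :
    ∑ i, g i = ∑ i₀, ∑ i', g (Fin.cons i₀ i') := by
  rw [← Equiv.sum_comp (Fin.consEquiv fun k => Fin (I k)) g, Fintype.sum_prod_type]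
  rfl

lemma tucker_cons {N : ℕ} {I r : Fin (N + 1) → ℕ}
    (M : ∀ k, Matrix (Fin (I k)) (Fin (r k)) ℝ) (G : (∀ k, Fin (r k)) → ℝ)
    (i₀ : Fin (I 0)) (i' : ∀ k : Fin N, Fin (I k.succ)) :
    tuckerMap M G (Fin.cons i₀ i') =
      (M 0).mulVec
        (fun j₀ => tuckerMap (fun k : Fin N => M k.succ)
          (fun j' => G (Fin.cons j₀ j')) i') i₀ := by
  unfold tuckerMap
  refine (sum_pi_succ (I := r) (fun j : ∀ k, Fin (r k) =>
    (∏ k, M k ((Fin.cons i₀ i' : ∀ k, Fin (I k)) k) (j k)) * G j)).trans ?_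
  simp only [Matrix.mulVec, dotProduct, Finset.mul_sum]
  apply Finset.sum_congr rfl
  intro j₀ _
  apply Finset.sum_congr rfl
  intro j' _
  rw [Fin.prod_univ_succ]
  simp [Fin.cons_zero, Fin.cons_succ, mul_assoc]

lemma tucker_sq_le : ∀ {N : ℕ} (I r : Fin N → ℕ)
    (M : ∀ k, Matrix (Fin (I k)) (Fin (r k)) ℝ) (G : (∀ k, Fin (r k)) → ℝ),
    ∑ i, (tuckerMap M G i) ^ 2 ≤ (∏ k, specNorm (M k) ^ 2) * ∑ j, G j ^ 2 := by
  intro N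
  induction N with
  | zero =>
    intro I r M G
    simp [tuckerMap]
  | succ N ih =>
    intro I r M G
    set H : Fin (r 0) → (∀ k : Fin N, Fin (I k.succ)) → ℝ :=
      fun j₀ => tuckerMap (fun k : Fin N => M k.succ)
        (fun j' => G (Fin.cons j₀ j')) with hH
    calc ∑ i, (tuckerMap M G i) ^ 2
        = ∑ i₀, ∑ i', (tuckerMap M G (Fin.cons i₀ i')) ^ 2 :=
          sum_pi_succ (fun i => (tuckerMap M G i) ^ 2)
      _ = ∑ i', ∑ i₀, ((M 0).mulVec (fun j₀ => H j₀ i') i₀) ^ 2 := by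
          rw [Finset.sum_comm]
          exact Finset.sum_congr rfl fun i' _ => Finset.sum_congr rfl fun i₀ _ => by
            rw [tucker_cons]
      _ ≤ ∑ i', specNorm (M 0) ^ 2 * ∑ j₀, (H j₀ i') ^ 2 :=
          Finset.sum_le_sum fun i' _ => sum_sq_mulVec_le (M 0) _
      _ = specNorm (M 0) ^ 2 * ∑ j₀, ∑ i', (H j₀ i') ^ 2 := by
          rw [← Finset.mul_sum, Finset.sum_comm]
      _ ≤ specNorm (M 0) ^ 2 * ∑ j₀, (∏ k : Fin N, specNorm (M k.succ) ^ 2) *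
            ∑ j', (G (Fin.cons j₀ j')) ^ 2 := by
          apply mul_le_mul_of_nonneg_left _ (by positivity)
          exact Finset.sum_le_sum fun j₀ _ =>
            ih (fun k => I k.succ) (fun k => r k.succ) (fun k => M k.succ) _
      _ = (∏ k, specNorm (M k) ^ 2) * ∑ j, G j ^ 2 := by
          rw [Fin.prod_univ_succ, sum_pi_succ (fun j => G j ^ 2), ← Finset.mul_sum]
          ring

lemma tucker_sq_eq : ∀ {N : ℕ} (I r : Fin N → ℕ)
    (M : ∀ k, Matrix (Fin (I k)) (Fin (r k)) ℝ) (hM : ∀ k, (M k)ᵀ * M k = 1)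
    (G : (∀ k, Fin (r k)) → ℝ),
    ∑ i, (tuckerMap M G i) ^ 2 = ∑ j, G j ^ 2 := by
  intro N
  induction N with
  | zero =>
    intro I r M _ G
    simp [tuckerMap]
  | succ N ih =>
    intro I r M hM G
    set H : Fin (r 0) → (∀ k : Fin N, Fin (I k.succ)) → ℝ :=
      fun j₀ => tuckerMap (fun k : Fin N => M k.succ)
        (fun j' => G (Fin.cons j₀ j')) with hH
    calc ∑ i, (tuckerMap M G i) ^ 2
        = ∑ i₀, ∑ i', (tuckerMap M G (Fin.cons i₀ i')) ^ 2 :=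
          sum_pi_succ (fun i => (tuckerMap M G i) ^ 2)
      _ = ∑ i', ∑ i₀, ((M 0).mulVec (fun j₀ => H j₀ i') i₀) ^ 2 := by
          rw [Finset.sum_comm]
          exact Finset.sum_congr rfl fun i' _ => Finset.sum_congr rfl fun i₀ _ => by
            rw [tucker_cons]
      _ = ∑ i', ∑ j₀, (H j₀ i') ^ 2 :=
          Finset.sum_congr rfl fun i' _ => sum_sq_mulVec_eq (M 0) (hM 0) _
      _ = ∑ j₀, ∑ i', (H j₀ i') ^ 2 := Finset.sum_comm
      _ = ∑ j₀, ∑ j', (G (Fin.cons j₀ j')) ^ 2 :=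
          Finset.sum_congr rfl fun j₀ _ =>
            ih (fun k => I k.succ) (fun k => r k.succ) (fun k => M k.succ)
              (fun k => hM k.succ) _
      _ = ∑ j, G j ^ 2 := (sum_pi_succ (fun j => G j ^ 2)).symm

lemma tucker_comp {N : ℕ} {I m r : Fin N → ℕ}
    (B : ∀ k, Matrix (Fin (I k)) (Fin (m k)) ℝ)
    (C : ∀ k, Matrix (Fin (m k)) (Fin (r k)) ℝ)
    (G : (∀ k, Fin (r k)) → ℝ) :
    tuckerMap B (tuckerMap C G) = tuckerMap (fun k => B k * C k) G := by
  funext i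
  unfold tuckerMap
  simp only [Finset.mul_sum]
  rw [Finset.sum_comm]
  apply Finset.sum_congr rfl
  intro l _
  simp only [← mul_assoc]
  rw [← Finset.sum_mul]
  congr 1
  have : ∀ j : ∀ k, Fin (m k),
      (∏ k, B k (i k) (j k)) * ∏ k, C k (j k) (l k)
        = ∏ k, (B k (i k) (j k) * C k (j k) (l k)) := fun j =>
    (Finset.prod_mul_distrib).symm
  calc ∑ j : ∀ k, Fin (m k), (∏ k, B k (i k) (j k)) * ∏ k, C k (j k) (l k)
      = ∑ j : ∀ k, Fin (m k), ∏ k, (B k (i k) (j k) * C k (j k) (l k)) :=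
        Finset.sum_congr rfl fun j _ => this j
    _ = ∏ k, ∑ jk, B k (i k) jk * C k jk (l k) := by
        rw [Finset.prod_univ_sum]
        exact Finset.sum_congr (Fintype.piFinset_univ) fun _ _ => rfl
    _ = ∏ k, (B k * C k) (i k) (l k) := by
        apply Finset.prod_congr rfl
        intro k _
        rw [Matrix.mul_apply]

lemma tucker_expand {N : ℕ} {I r : Fin N → ℕ}
    (P Q : ∀ k, Matrix (Fin (I k)) (Fin (r k)) ℝ) (G : (∀ k, Fin (r k)) → ℝ)
    (i : ∀ k, Fin (I k)) :
    tuckerMap (fun k => P k + Q k) G i =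
      ∑ S ∈ (Finset.univ : Finset (Fin N)).powerset,
        tuckerMap (fun k => if k ∈ S then Q k else P k) G i := by
  unfold tuckerMap
  rw [Finset.sum_comm]
  apply Finset.sum_congr rfl
  intro j _
  rw [← Finset.sum_mul]
  congr 1
  simp only [Matrix.add_apply]
  calc ∏ k, (P k (i k) (j k) + Q k (i k) (j k))
      = ∏ k, (Q k (i k) (j k) + P k (i k) (j k)) := by
        apply Finset.prod_congr rfl; intro k _; ring
    _ = ∑ S ∈ (Finset.univ : Finset (Fin N)).powerset,
          (∏ k ∈ S, Q k (i k) (j k)) * ∏ k ∈ Finset.univ \ S, P k (i k) (j k) :=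
        Finset.prod_add _ _ _
    _ = ∑ S ∈ (Finset.univ : Finset (Fin N)).powerset,
          ∏ k, (if k ∈ S then Q k else P k) (i k) (j k) := by
        apply Finset.sum_congr rfl
        intro S _
        have hite : ∀ k, (if k ∈ S then Q k else P k) (i k) (j k)
            = if k ∈ S then Q k (i k) (j k) else P k (i k) (j k) := fun k => by
          split_ifs <;> rfl
        simp only [hite]
        rw [Finset.prod_ite (f := fun k => Q k (i k) (j k)) (g := fun k => P k (i k) (j k))]
        congr 1
        · congr 1
          rw [Finset.filter_mem_eq_inter, Finset.univ_inter]
        · congr 1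
          rw [← Finset.sdiff_eq_filter]

theorem tucker_residual_upper {N : ℕ} (hN : 0 < N) (I r : Fin N → ℕ)
    (A B : ∀ k, Matrix (Fin (I k)) (Fin (r k)) ℝ)
    (hA : ∀ k, (A k)ᵀ * A k = 1) (hB : ∀ k, (B k)ᵀ * B k = 1)
    (G : (∀ k, Fin (r k)) → ℝ) (T : (∀ k, Fin (I k)) → ℝ)
    (hT : T = tuckerMap A G)
    (Xopt : (∀ k, Fin (r k)) → ℝ)
    (hXopt : Xopt = tuckerMap (fun k => (B k)ᵀ * A k) G)
    (s : ℝ)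
    (hs : haveI : Nonempty (Fin N) := Fin.pos_iff_nonempty.mp hN
      s = ⨆ k, specNorm (B k * (B k)ᵀ - A k * (A k)ᵀ)) :
    Real.sqrt (∑ i, (tuckerMap B Xopt i - T i) ^ 2) ≤
      Real.sqrt (∑ i, T i ^ 2) * ((1 + s) ^ N - 1) := by
  haveI : Nonempty (Fin N) := Fin.pos_iff_nonempty.mp hN
  set E : ∀ k, Matrix (Fin (I k)) (Fin (I k)) ℝ :=
    fun k => B k * (B k)ᵀ - A k * (A k)ᵀ with hE
  set F : ∀ k, Matrix (Fin (I k)) (Fin (r k)) ℝ := fun k => E k * A k with hF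
  have hsk : ∀ k, specNorm (E k) ≤ s := by
    intro k
    rw [hs]
    exact le_ciSup (f := fun k => specNorm (B k * (B k)ᵀ - A k * (A k)ᵀ))
      (Set.Finite.bddAbove (Set.finite_range _)) k
  have hs0 : 0 ≤ s :=
    le_trans (specNorm_nonneg (E (Classical.arbitrary _))) (hsk _)
  have hFs : ∀ k, specNorm (F k) ≤ s := by
    intro k
    refine le_trans (specNorm_mul_le _ _) ?_
    calc specNorm (E k) * specNorm (A k)
        ≤ s * 1 := mul_le_mul (hsk k) (specNorm_le_one (A k) (hA k))
          (specNorm_nonneg _) hs0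
      _ = s := mul_one s
  have hfact : (fun k => B k * ((B k)ᵀ * A k)) = fun k => A k + F k := by
    funext k
    show B k * ((B k)ᵀ * A k)
        = A k + (B k * (B k)ᵀ - A k * (A k)ᵀ) * A k
    rw [Matrix.sub_mul, Matrix.mul_assoc (A k) ((A k)ᵀ) (A k), hA k,
      Matrix.mul_one, ← Matrix.mul_assoc]
    abel
  have hD : tuckerMap B Xopt = tuckerMap (fun k => A k + F k) G := by
    rw [hXopt, tucker_comp, hfact]
  set P : Finset (Finset (Fin N)) :=
    ((Finset.univ : Finset (Fin N)).powerset).erase ∅ with hP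
  set g : Finset (Fin N) → (∀ k, Fin (I k)) → ℝ :=
    fun S => tuckerMap (fun k => if k ∈ S then F k else A k) G with hg
  have hdiff : ∀ i, tuckerMap B Xopt i - T i = ∑ S ∈ P, g S i := by
    intro i
    rw [hD, hT, tucker_expand]
    have h0 : g ∅ i = tuckerMap A G i := by
      simp [hg]
    rw [← Finset.add_sum_erase _ _ (Finset.empty_mem_powerset _), ← hP, ← h0]
    ring_nf
    exact add_sub_cancel_left _ _
  set C : ℝ := Real.sqrt (∑ j, G j ^ 2) with hC
  have hC0 : 0 ≤ C := Real.sqrt_nonneg _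
  have hTC : Real.sqrt (∑ i, T i ^ 2) = C := by
    rw [hT, tucker_sq_eq I r A hA G]
  have hSbound : ∀ S ∈ P, Real.sqrt (∑ i, g S i ^ 2) ≤ s ^ S.card * C := by
    intro S _
    have h1 : ∑ i, g S i ^ 2
        ≤ (∏ k, specNorm (if k ∈ S then F k else A k) ^ 2) * ∑ j, G j ^ 2 :=
      tucker_sq_le I r _ G
    have h2 : Real.sqrt (∑ i, g S i ^ 2)
        ≤ (∏ k, specNorm (if k ∈ S then F k else A k)) * C := by
      refine le_trans (Real.sqrt_le_sqrt h1) ?_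
      rw [Real.sqrt_mul (by positivity), Finset.prod_pow,
        Real.sqrt_sq (Finset.prod_nonneg fun k _ => specNorm_nonneg _), hC]
    refine le_trans h2 (mul_le_mul_of_nonneg_right ?_ hC0)
    calc ∏ k, specNorm (if k ∈ S then F k else A k)
        ≤ ∏ k, (if k ∈ S then s else 1) := by
          refine Finset.prod_le_prod (fun k _ => specNorm_nonneg _) fun k _ => ?_
          split_ifs
          · exact hFs k
          · exact specNorm_le_one (A k) (hA k)
      _ = s ^ S.card := by
          rw [Finset.prod_ite_mem, Finset.univ_inter, Finset.prod_const]
  have hbin : ∑ S ∈ (Finset.univ : Finset (Fin N)).powerset, s ^ S.card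
      = (1 + s) ^ N := by
    calc ∑ S ∈ (Finset.univ : Finset (Fin N)).powerset, s ^ S.card
        = ∑ S ∈ (Finset.univ : Finset (Fin N)).powerset,
            (∏ _k ∈ S, s) * ∏ _k ∈ Finset.univ \ S, (1 : ℝ) := by
          simp [Finset.prod_const]
      _ = ∏ _k : Fin N, (s + 1) := (Finset.prod_add _ _ _).symm
      _ = (1 + s) ^ N := by
          rw [Finset.prod_const, Finset.card_univ, Fintype.card_fin, add_comm]
  have hPsum : ∑ S ∈ P, s ^ S.card = (1 + s) ^ N - 1 := by
    rw [hP, Finset.sum_erase_eq_sub (Finset.empty_mem_powerset _), hbin]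
    simp
  calc Real.sqrt (∑ i, (tuckerMap B Xopt i - T i) ^ 2)
      = Real.sqrt (∑ i, (∑ S ∈ P, g S i) ^ 2) := by
        congr 1
        exact Finset.sum_congr rfl fun i _ => by rw [hdiff i]
    _ ≤ ∑ S ∈ P, Real.sqrt (∑ i, g S i ^ 2) := sqrt_sum_sq_sum_le P g
    _ ≤ ∑ S ∈ P, s ^ S.card * C := Finset.sum_le_sum hSbound
    _ = (∑ S ∈ P, s ^ S.card) * C := (Finset.sum_mul _ _ _).symm
    _ = ((1 + s) ^ N - 1) * C := by rw [hPsum]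
    _ = Real.sqrt (∑ i, T i ^ 2) * ((1 + s) ^ N - 1) := by rw [hTC]; ring
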